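/- Fix D. There exists a finite set of natural numbers {N₁,…,N_M} (depending only on D) such that for every d and every d-tuple 𝒜 of D×D complex matrices: if 𝒜 is N-injective for some N, then 𝒜 is N_i-injective for some i ∈ {1,…,M}. In particular the bound can be chosen independently of d. -/

import Mathlib

/-- `𝒜` is `N`-injective if the length-`N` products of its matrices span
all of `M_D(ℂ)`. -/
def NInjective {D d : ℕ} (A : Fin d → Matrix (Fin D) (Fin D) ℂ) (N : ℕ) : Prop :=
  Submodule.span ℂ
    {M | ∃ i : Fin N → Fin d, M = (List.ofFn fun k => A (i k)).prod} = ⊤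

namespace QW

open Submodule Matrix Pointwise

abbrev Mat (D : ℕ) := Matrix (Fin D) (Fin D) ℂ

def wordSet {D d : ℕ} (A : Fin d → Mat D) (N : ℕ) : Set (Mat D) :=
  {M | ∃ i : Fin N → Fin d, M = (List.ofFn fun k => A (i k)).prod}

lemma nInjective_iff {D d : ℕ} (A : Fin d → Mat D) (N : ℕ) :
    NInjective A N ↔ Submodule.span ℂ (wordSet A N) = ⊤ := Iff.rfl

lemma wordSet_zero {D d : ℕ} (A : Fin d → Mat D) : wordSet A 0 = {1} := by
  ext M
  constructor
  · rintro ⟨i, rfl⟩; simp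
  · rintro rfl; exact ⟨Fin.elim0, by simp⟩

lemma wordSet_succ {D d : ℕ} (A : Fin d → Mat D) (N : ℕ) :
    wordSet A (N + 1) = Set.range A * wordSet A N := by
  ext M
  constructor
  · rintro ⟨i, rfl⟩
    refine ⟨A (i 0), Set.mem_range_self _, (List.ofFn fun k : Fin N => A (i k.succ)).prod,
      ⟨fun k => i k.succ, rfl⟩, ?_⟩
    rw [List.ofFn_succ, List.prod_cons]
  · rintro ⟨x, ⟨j, rfl⟩, y, ⟨i, rfl⟩, rfl⟩
    refine ⟨Fin.cons j i, ?_⟩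
    rw [List.ofFn_succ, List.prod_cons]
    simp

lemma span_wordSet {D d : ℕ} (A : Fin d → Mat D) (N : ℕ) :
    Submodule.span ℂ (wordSet A N) = (Submodule.span ℂ (Set.range A)) ^ N := by
  induction N with
  | zero => rw [wordSet_zero, pow_zero, Submodule.one_eq_span]
  | succ N ih => rw [wordSet_succ, ← Submodule.span_mul_span, ih, pow_succ']

lemma nInjective_congr {D d e : ℕ} {A : Fin d → Mat D} {B : Fin e → Mat D}
    (h : Submodule.span ℂ (Set.range A) = Submodule.span ℂ (Set.range B)) (N : ℕ) :
    NInjective A N ↔ NInjective B N := by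
  rw [nInjective_iff, nInjective_iff, span_wordSet, span_wordSet, h]

lemma exists_reduced {D d : ℕ} (A : Fin d → Mat D) :
    ∃ B : Fin (D * D) → Mat D,
      Submodule.span ℂ (Set.range B) = Submodule.span ℂ (Set.range A) := by
  set V := Submodule.span ℂ (Set.range A) with hV
  have hr : Module.finrank ℂ V ≤ D * D := by
    have h1 := Submodule.finrank_le V
    have h2 : Module.finrank ℂ (Mat D) = D * D := by
      rw [Module.finrank_matrix]; simp
    omega
  let b := Module.finBasis ℂ V
  refine ⟨fun k => if h : (k : ℕ) < Module.finrank ℂ V then (b ⟨k, h⟩ : Mat D) else 0, ?_⟩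
  have hVspan : Submodule.span ℂ (Set.range fun i => ((b i : V) : Mat D)) = V := by
    have := congrArg (Submodule.map V.subtype) b.span_eq
    rwa [Submodule.map_span, ← Set.range_comp, Submodule.map_top, Submodule.range_subtype] at this
  apply le_antisymm
  · rw [Submodule.span_le]
    rintro x ⟨k, rfl⟩
    dsimp only
    split
    · exact (b _).2
    · exact V.zero_mem
  · conv_lhs => rw [← hVspan]
    rw [Submodule.span_le]
    rintro x ⟨i, rfl⟩
    have hi : (i : ℕ) < D * D := lt_of_lt_of_le i.2 hr
    apply Submodule.subset_span
    refine ⟨⟨i, hi⟩, ?_⟩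
    simp [i.2]


abbrev RD (D : ℕ) := MvPolynomial (Fin (D * D) × Fin D × Fin D) ℂ

noncomputable def gMat (D : ℕ) (k : Fin (D * D)) : Matrix (Fin D) (Fin D) (RD D) :=
  Matrix.of fun i j => MvPolynomial.X (k, i, j)

noncomputable def evalA {D : ℕ} (A : Fin (D * D) → Mat D) : RD D →+* ℂ :=
  MvPolynomial.eval (fun v => A v.1 v.2.1 v.2.2)

lemma evalA_gMat {D : ℕ} (A : Fin (D * D) → Mat D) (k : Fin (D * D)) :
    (evalA A).mapMatrix (gMat D k) = A k := by
  ext i j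
  simp [gMat, evalA]

noncomputable def gWord (D : ℕ) {N : ℕ} (w : Fin N → Fin (D * D)) :
    Matrix (Fin D) (Fin D) (RD D) :=
  (List.ofFn fun k => gMat D (w k)).prod

lemma evalA_gWord {D : ℕ} (A : Fin (D * D) → Mat D) {N : ℕ} (w : Fin N → Fin (D * D)) :
    (evalA A).mapMatrix (gWord D w) = (List.ofFn fun k => A (w k)).prod := by
  unfold gWord
  have h : ((evalA A).mapMatrix ∘ fun k => gMat D (w k)) = fun k => A (w k) :=
    funext fun k => evalA_gMat A (w k)
  rw [map_list_prod, List.map_ofFn, h]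

noncomputable def selMat (D : ℕ) {N : ℕ} (s : Fin (D * D) → Fin N → Fin (D * D)) :
    Matrix (Fin (D * D)) (Fin (D * D)) (RD D) :=
  Matrix.of fun p q =>
    gWord D (s q) (finProdFinEquiv.symm p).1 (finProdFinEquiv.symm p).2

noncomputable def wpoly (D : ℕ) {N : ℕ} (s : Fin (D * D) → Fin N → Fin (D * D)) : RD D :=
  (selMat D s).det

noncomputable def Lequiv (D : ℕ) : Mat D ≃ₗ[ℂ] (Fin (D * D) → ℂ) where
  toFun M := fun p => M (finProdFinEquiv.symm p).1 (finProdFinEquiv.symm p).2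
  invFun v := Matrix.of fun i j => v (finProdFinEquiv (i, j))
  map_add' M N := rfl
  map_smul' c M := rfl
  left_inv M := by
    funext i j
    show M (finProdFinEquiv.symm (finProdFinEquiv (i, j))).1
        (finProdFinEquiv.symm (finProdFinEquiv (i, j))).2 = M i j
    rw [Equiv.symm_apply_apply]
  right_inv v := by
    funext p
    show v (finProdFinEquiv ((finProdFinEquiv.symm p).1, (finProdFinEquiv.symm p).2)) = v p
    exact congrArg v (by rw [Prod.mk.eta, Equiv.apply_symm_apply])

lemma evalA_selMat {D N : ℕ} (A : Fin (D * D) → Mat D)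
    (s : Fin (D * D) → Fin N → Fin (D * D)) (p q : Fin (D * D)) :
    ((evalA A).mapMatrix (selMat D s)) p q
      = Lequiv D ((List.ofFn fun k => A (s q k)).prod) p := by
  have h := evalA_gWord A (s q)
  calc ((evalA A).mapMatrix (selMat D s)) p q
      = ((evalA A).mapMatrix (gWord D (s q))) (finProdFinEquiv.symm p).1
          (finProdFinEquiv.symm p).2 := rfl
    _ = _ := by rw [h]; rfl


lemma nInjective_of_eval_ne {D N : ℕ} (A : Fin (D * D) → Mat D)
    (s : Fin (D * D) → Fin N → Fin (D * D)) (h : evalA A (wpoly D s) ≠ 0) :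
    NInjective A N := by
  set C : Matrix (Fin (D * D)) (Fin (D * D)) ℂ := (evalA A).mapMatrix (selMat D s) with hC
  have hdet : C.det ≠ 0 := by
    rw [← RingHom.map_det]
    exact h
  have hCu : IsUnit C := (Matrix.isUnit_iff_isUnit_det C).2 (isUnit_iff_ne_zero.2 hdet)
  have hsurj : Function.Surjective C.mulVec := Matrix.mulVec_surjective_iff_isUnit.2 hCu
  rw [nInjective_iff, eq_top_iff]
  rintro x -
  obtain ⟨v, hv⟩ := hsurj (Lequiv D x)
  have hx : x = ∑ q, v q • (List.ofFn fun k => A (s q k)).prod := by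
    apply (Lequiv D).injective
    rw [map_sum]
    simp only [_root_.map_smul]
    rw [← hv]
    funext p
    rw [Finset.sum_apply]
    simp only [Pi.smul_apply, smul_eq_mul]
    rw [Matrix.mulVec, dotProduct]
    apply Finset.sum_congr rfl
    intro q _
    rw [hC, evalA_selMat A s p q, mul_comm]
  rw [hx]
  exact Submodule.sum_mem _ fun q _ =>
    Submodule.smul_mem _ _ (Submodule.subset_span ⟨s q, rfl⟩)

lemma exists_eval_ne {D N : ℕ} (A : Fin (D * D) → Mat D) (h : NInjective A N) :
    ∃ s : Fin (D * D) → Fin N → Fin (D * D), evalA A (wpoly D s) ≠ 0 := by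
  obtain ⟨t, hsub, hspan, hli⟩ := exists_linearIndependent ℂ (wordSet A N)
  have hspan' : Submodule.span ℂ t = ⊤ := hspan.trans ((nInjective_iff A N).mp h)
  let bas : Module.Basis t ℂ (Mat D) := Module.Basis.mk hli (by rw [Subtype.range_coe, hspan'])
  haveI : Fintype t := FiniteDimensional.fintypeBasisIndex bas
  have hcard : Fintype.card t = D * D := by
    rw [← Module.finrank_eq_card_basis bas, Module.finrank_matrix]
    simp
  let eqv : Fin (D * D) ≃ t := (Fintype.equivFinOfCardEq hcard).symm
  have hw : ∀ x : t, ∃ i : Fin N → Fin (D * D),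
      (x : Mat D) = (List.ofFn fun k => A (i k)).prod := fun x => hsub x.2
  choose w hwspec using hw
  refine ⟨fun q => w (eqv q), ?_⟩
  set C : Matrix (Fin (D * D)) (Fin (D * D)) ℂ :=
    (evalA A).mapMatrix (selMat D (fun q => w (eqv q))) with hCdef
  have hCu : IsUnit C := by
    rw [← Matrix.linearIndependent_cols_iff_isUnit]
    have hc : (fun q => Cᵀ q) = fun q => Lequiv D ((eqv q : Mat D)) := by
      funext q
      funext p
      show C p q = _
      rw [hCdef, evalA_selMat, ← hwspec (eqv q)]
    rw [show C.col = fun q => Cᵀ q from rfl, hc]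
    exact ((hli.comp eqv eqv.injective).map' (Lequiv D).toLinearMap (Lequiv D).ker)
  rw [wpoly, RingHom.map_det]
  have := (Matrix.isUnit_iff_isUnit_det C).1 hCu
  exact this.ne_zero


noncomputable def gensSet (D N : ℕ) : Set (RD D) :=
  Set.range (fun s : Fin (D * D) → Fin N → Fin (D * D) => wpoly D s)

noncomputable def bigIdeal (D N : ℕ) : Ideal (RD D) :=
  Ideal.span (⋃ m ∈ Set.Iic N, gensSet D m)

lemma bigIdeal_mono (D : ℕ) : Monotone (bigIdeal D) := by
  intro a b hab
  apply Ideal.span_mono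
  apply Set.biUnion_subset_biUnion_left
  exact Set.Iic_subset_Iic.2 hab

end QW

open QW

theorem quantum_wielandt_uniform (D : ℕ) :
    ∃ F : Finset ℕ, ∀ d : ℕ, ∀ A : Fin d → Matrix (Fin D) (Fin D) ℂ,
      (∃ N : ℕ, NInjective A N) → ∃ Ni ∈ F, NInjective A Ni := by
  obtain ⟨N₀, hN₀⟩ := monotone_stabilizes_iff_noetherian.mpr
    (inferInstance : IsNoetherian (RD D) (RD D)) ⟨bigIdeal D, bigIdeal_mono D⟩
  refine ⟨Finset.range (N₀ + 1), ?_⟩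
  rintro d A ⟨N, hN⟩
  obtain ⟨B, hB⟩ := exists_reduced A
  have hNB : NInjective B N := (nInjective_congr hB N).mpr hN
  rcases le_or_gt N N₀ with hle | hlt
  · exact ⟨N, Finset.mem_range.2 (Nat.lt_succ_of_le hle), hN⟩
  · obtain ⟨s, hs⟩ := exists_eval_ne B hNB
    have hmem : wpoly D s ∈ bigIdeal D N :=
      Ideal.subset_span (Set.mem_biUnion (Set.mem_Iic.2 le_rfl) ⟨s, rfl⟩)
    have hmem' : wpoly D s ∈ bigIdeal D N₀ := by
      have := hN₀ N hlt.le
      have heq : bigIdeal D N₀ = bigIdeal D N := this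
      rw [heq]
      exact hmem
    have hex : ∃ x ∈ ⋃ m ∈ Set.Iic N₀, gensSet D m, evalA B x ≠ 0 := by
      by_contra hcon
      push_neg at hcon
      have hle' : bigIdeal D N₀ ≤ RingHom.ker (evalA B) :=
        Ideal.span_le.2 fun x hx => RingHom.mem_ker.2 (hcon x hx)
      exact hs (hle' hmem')
    obtain ⟨x, hxU, hxne⟩ := hex
    simp only [Set.mem_iUnion, Set.mem_Iic] at hxU
    obtain ⟨m, hm, hx⟩ := hxU
    obtain ⟨s', rfl⟩ := hx
    have hBm : NInjective B m := nInjective_of_eval_ne B s' hxne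
    exact ⟨m, Finset.mem_range.2 (Nat.lt_succ_of_le hm),
      (nInjective_congr hB m).mp hBm⟩
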